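/- Condition Д'*_{q_n} with q_n ≡ 1 holds for the cylinder approximations: fix α ∈ (0,2), 0 < τ″ < τ′, and any sequence (r_n) of positive integers with r_n → ∞ and r_n/n → 0. Then lim_{n→∞} n · 𝔪( Γ_n^+ ∩ ⋃_{k=2}^{r_n−1} G^{−k}(Γ_n^+) ) = 0. -/

import Mathlib

open Set MeasureTheory Filter
open scoped ENNReal Topology Classical

/-- The setup of Section 2 of the paper: a full-branched Markov linear map `G` on `[0,1]`
with branch domains `I_1,…,I_{k_I}` (mapped affinely onto `[0,1]`) and complementary
intervals `J_j` (mapped affinely onto `(0,1)`), all of length at most `1/2`. -/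
structure CantorData where
  kI : ℕ
  hkI : 1 ≤ kI
  a : ℕ → ℝ
  ha_lt : ∀ i, i + 1 < 2 * kI → a i < a (i + 1)
  ha0 : 0 ≤ a 0
  ha1 : a (2 * kI - 1) ≤ 1
  G : ℝ → ℝ
  hGmaps : Set.MapsTo G (Set.Icc 0 1) (Set.Icc 0 1)
  hGI : ∀ i < kI, ∃ s c : ℝ,
    |s| * (a (2 * i + 1) - a (2 * i)) = 1 ∧
    (∀ x ∈ Set.Icc (a (2 * i)) (a (2 * i + 1)), G x = s * x + c) ∧
    Set.BijOn G (Set.Icc (a (2 * i)) (a (2 * i + 1))) (Set.Icc 0 1)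
  hGJmid : ∀ i, i + 1 < kI → ∃ s c : ℝ,
    |s| * (a (2 * i + 2) - a (2 * i + 1)) = 1 ∧
    (∀ x ∈ Set.Ioo (a (2 * i + 1)) (a (2 * i + 2)), G x = s * x + c) ∧
    Set.SurjOn G (Set.Ioo (a (2 * i + 1)) (a (2 * i + 2))) (Set.Ioo 0 1)
  hGJleft : 0 < a 0 → ∃ s c : ℝ,
    |s| * a 0 = 1 ∧
    (∀ x ∈ Set.Ico 0 (a 0), G x = s * x + c) ∧
    Set.SurjOn G (Set.Ico 0 (a 0)) (Set.Ioo 0 1)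
  hGJright : a (2 * kI - 1) < 1 → ∃ s c : ℝ,
    |s| * (1 - a (2 * kI - 1)) = 1 ∧
    (∀ x ∈ Set.Ioc (a (2 * kI - 1)) 1, G x = s * x + c) ∧
    Set.SurjOn G (Set.Ioc (a (2 * kI - 1)) 1) (Set.Ioo 0 1)
  hIlen : ∀ i < kI, a (2 * i + 1) - a (2 * i) ≤ 1 / 2
  hJlenL : a 0 ≤ 1 / 2
  hJlenR : 1 - a (2 * kI - 1) ≤ 1 / 2
  hJlenM : ∀ i, i + 1 < kI → a (2 * i + 2) - a (2 * i + 1) ≤ 1 / 2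
  hkJ : (Set.Icc (0:ℝ) 1 \ ⋃ i ∈ Finset.range kI,
      Set.Icc (a (2 * i)) (a (2 * i + 1))).Nonempty

namespace CantorData

variable (S : CantorData)

/-- The union `⋃_i I_i` of the branch domains forming the Cantor construction. -/
def IU : Set ℝ := ⋃ i ∈ Finset.range S.kI, Set.Icc (S.a (2 * i)) (S.a (2 * i + 1))

/-- `Λ_n = {x ∈ [0,1] : G^{i-1}(x) ∈ ⋃ I for all 1 ≤ i ≤ n}`. -/
def Lam (n : ℕ) : Set ℝ := {x ∈ Set.Icc (0:ℝ) 1 | ∀ i < n, S.G^[i] x ∈ S.IU}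

/-- The dynamically defined Cantor set `Λ = ⋂_n Λ_n`. -/
def Cantor : Set ℝ := ⋂ n : ℕ, S.Lam n

/-- `λ = |⋃ I_i| = Σ_i 1/m_i`. -/
noncomputable def lam : ℝ := ∑ i ∈ Finset.range S.kI, (S.a (2 * i + 1) - S.a (2 * i))

/-- `𝔪`, Lebesgue measure on `[0,1]`. -/
noncomputable def mes (_S : CantorData) : Measure ℝ := volume.restrict (Set.Icc 0 1)

/-- `ψ(x) = Σ_{i ∈ 𝓘_x} 2^{-i}` where `𝓘_x = {i ≥ 1 : G^{i-1}(x) ∉ ⋃ I}`. -/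
noncomputable def psi (x : ℝ) : ℝ :=
  ∑' i : ℕ, if S.G^[i] x ∈ S.IU then 0 else (2:ℝ)⁻¹ ^ (i + 1)

/-- `F(t) = 𝔪{x : ψ(x) ≤ t}`, the distribution function of `ψ`. -/
noncomputable def F (t : ℝ) : ℝ := (S.mes {x | S.psi x ≤ t}).toReal

/-- `φ_α = (F ∘ ψ)^{-1/α}`, with value `∞` where `F ∘ ψ` vanishes. -/
noncomputable def phi (α : ℝ) (x : ℝ) : ℝ≥0∞ :=
  ENNReal.ofReal (S.F (S.psi x)) ^ (-(1 / α))

/-- `X_n = φ_α ∘ G^n`. -/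
noncomputable def X (α : ℝ) (n : ℕ) (x : ℝ) : ℝ≥0∞ := S.phi α (S.G^[n] x)

/-- `P_n`: the points following the Cantor construction exactly `n` steps and
never entering `⋃ I` afterwards. -/
def Pset (n : ℕ) : Set ℝ :=
  {x ∈ Set.Icc (0:ℝ) 1 | (∀ i < n, S.G^[i] x ∈ S.IU) ∧ ∀ i, n ≤ i → S.G^[i] x ∉ S.IU}

/-- The family of partition intervals `(I,J)_1,…,(I,J)_{k_I+k_J}`. -/
def PieceFamily : Set (Set ℝ) :=
  ((fun i => Set.Icc (S.a (2 * i)) (S.a (2 * i + 1))) '' Set.Iio S.kI) ∪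
  ((fun i => Set.Ioo (S.a (2 * i + 1)) (S.a (2 * i + 2))) '' {i | i + 1 < S.kI}) ∪
  {Set.Ico (0:ℝ) (S.a 0), Set.Ioc (S.a (2 * S.kI - 1)) 1}

/-- The depth-`d` cylinder `C_w = ⋂_{k=1}^d G^{-(k-1)}((I,J)_{w_k})`. -/
def Cyl (d : ℕ) (w : ℕ → Set ℝ) : Set ℝ := ⋂ k ∈ Finset.range d, (S.G^[k]) ⁻¹' (w k)

/-- `C` is a depth-`d` cylinder. -/
def IsCylinder (d : ℕ) (C : Set ℝ) : Prop :=
  ∃ w : ℕ → Set ℝ, (∀ k < d, w k ∈ S.PieceFamily) ∧ C = S.Cyl d w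

/-- `Υ⁺(A,d)`: union of the depth-`d` cylinders meeting `A`. -/
def upApprox (A : Set ℝ) (d : ℕ) : Set ℝ :=
  ⋃₀ {C | S.IsCylinder d C ∧ (C ∩ A).Nonempty}

/-- `Υ⁻(A,d)`: union of the depth-`d` cylinders contained in `A`. -/
def lowApprox (A : Set ℝ) (d : ℕ) : Set ℝ :=
  ⋃₀ {C | S.IsCylinder d C ∧ C ⊆ A}

/-- `u_n(τ) = (n/τ)^{1/α}`. -/
noncomputable def un (_S : CantorData) (α τ : ℝ) (n : ℕ) : ℝ := ((n : ℝ) / τ) ^ (1 / α)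

/-- `U_n(τ) = {X_0 > u_n(τ)}`. -/
noncomputable def Un (α τ : ℝ) (n : ℕ) : Set ℝ :=
  {x ∈ Set.Icc (0:ℝ) 1 | ENNReal.ofReal (S.un α τ n) < S.X α 0 x}

/-- `U_n^{(1)}(τ) = U_n(τ) ∩ G^{-1}([0,1] ∖ U_n(τ))`. -/
noncomputable def Un1 (α τ : ℝ) (n : ℕ) : Set ℝ :=
  S.Un α τ n ∩ S.G ⁻¹' (Set.Icc 0 1 \ S.Un α τ n)

/-- `U_n(τ',τ'') = U_n(τ') ∖ U_n(τ'')`. -/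
noncomputable def UnPair (α τ' τ'' : ℝ) (n : ℕ) : Set ℝ := S.Un α τ' n \ S.Un α τ'' n

/-- `U_n(τ',τ'')^{(1)}`. -/
noncomputable def UnPair1 (α τ' τ'' : ℝ) (n : ℕ) : Set ℝ :=
  S.UnPair α τ' τ'' n ∩ S.G ⁻¹' (Set.Icc 0 1 \ S.UnPair α τ' τ'' n)

/-- `j_{n,τ}`: the least `j` with `λ^j ≤ τ/n`. -/
noncomputable def jn (τ : ℝ) (n : ℕ) : ℕ := sInf {j : ℕ | S.lam ^ j ≤ τ / n}

/-- `Γ_n^+`: outer approximation of `U_n(τ',τ'')^{(1)}` by depth-`2 j_{n,τ'}` cylinders. -/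
noncomputable def GammaPlus (α τ' τ'' : ℝ) (n : ℕ) : Set ℝ :=
  S.upApprox (S.UnPair1 α τ' τ'' n) (2 * S.jn τ' n)

/-- `Γ_n^-`: inner approximation of `U_n(τ',τ'')^{(1)}` by depth-`2 j_{n,τ'}` cylinders. -/
noncomputable def GammaMinus (α τ' τ'' : ℝ) (n : ℕ) : Set ℝ :=
  S.lowApprox (S.UnPair1 α τ' τ'' n) (2 * S.jn τ' n)

end CantorData
namespace CantorData

variable (S : CantorData)

lemma a_mono : ∀ {i j : ℕ}, i ≤ j → j < 2 * S.kI → S.a i ≤ S.a j := by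
  intro i j hij hj
  induction j with
  | zero => simp_all
  | succ m ih =>
    rcases Nat.lt_or_ge i (m+1) with h | h
    · exact le_trans (ih (Nat.lt_succ_iff.mp h) (lt_trans (Nat.lt_succ_self m) hj))
        (le_of_lt (S.ha_lt m hj))
    · have : i = m + 1 := le_antisymm hij h
      simp [this]

lemma a_strict : ∀ {i j : ℕ}, i < j → j < 2 * S.kI → S.a i < S.a j := by
  intro i j hij hj
  have h1 : S.a i < S.a (i+1) := S.ha_lt i (lt_of_le_of_lt hij hj)
  exact lt_of_lt_of_le h1 (S.a_mono hij hj)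

lemma two_kI_pos : 0 < 2 * S.kI := by have := S.hkI; omega

lemma a_last (i : ℕ) (hi : i < 2 * S.kI) : S.a i ≤ S.a (2 * S.kI - 1) :=
  S.a_mono (by omega) (by omega)

lemma a_le_one (i : ℕ) (hi : i < 2 * S.kI) : S.a i ≤ 1 :=
  le_trans (S.a_last i hi) S.ha1

lemma a_nonneg (i : ℕ) (hi : i < 2 * S.kI) : 0 ≤ S.a i :=
  le_trans S.ha0 (S.a_mono (Nat.zero_le i) hi)

lemma Ii_subset_Icc {i : ℕ} (hi : i < S.kI) :
    Set.Icc (S.a (2 * i)) (S.a (2 * i + 1)) ⊆ Set.Icc (0:ℝ) 1 := by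
  intro x hx
  exact ⟨le_trans (S.a_nonneg (2*i) (by omega)) hx.1,
    le_trans hx.2 (S.a_le_one (2*i+1) (by omega))⟩

lemma IU_subset : S.IU ⊆ Set.Icc (0:ℝ) 1 := by
  intro x hx
  simp only [IU, Set.mem_iUnion] at hx
  obtain ⟨i, hi, hx⟩ := hx
  exact S.Ii_subset_Icc (by simpa using hi) hx

lemma Ii_len_pos {i : ℕ} (hi : i < S.kI) : 0 < S.a (2*i+1) - S.a (2*i) := by
  have := S.a_strict (i := 2*i) (j := 2*i+1) (by omega) (by omega)
  linarith

lemma lam_pos : 0 < S.lam := by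
  have h := S.hkI
  refine Finset.sum_pos (fun i hi => S.Ii_len_pos (Finset.mem_range.mp hi)) ?_
  exact ⟨0, Finset.mem_range.mpr (by omega)⟩

/-- even/odd split of a sum over `range (2*m-1)` -/
lemma sum_parity (f : ℕ → ℝ) (m : ℕ) (hm : 1 ≤ m) :
    ∑ k ∈ Finset.range (2*m-1), f k
      = (∑ i ∈ Finset.range m, f (2*i)) + ∑ i ∈ Finset.range (m-1), f (2*i+1) := by
  induction m with
  | zero => omega
  | succ p ih =>
    rcases Nat.eq_zero_or_pos p with rfl | hp
    · simp
    · have h1 : 2 * (p+1) - 1 = (2*p - 1) + 1 + 1 := by omega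
      have h2 : 2*p - 1 + 1 = 2*p := by omega
      have h3 : (p+1) - 1 = (p - 1) + 1 := by omega
      rw [h1, Finset.sum_range_succ, Finset.sum_range_succ, ih hp,
        Finset.sum_range_succ (fun i => f (2*i)) p, h3,
        Finset.sum_range_succ (fun i => f (2*i+1)) (p-1), h2]
      have h4 : 2 * (p-1) + 1 = 2 * p - 1 := by omega
      rw [h4]
      ring

lemma gapsum :
    S.a 0 + (∑ i ∈ Finset.range (S.kI - 1), (S.a (2*i+2) - S.a (2*i+1)))
      + (1 - S.a (2 * S.kI - 1)) = 1 - S.lam := by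
  have hk := S.hkI
  have tele : ∑ k ∈ Finset.range (2*S.kI-1), (S.a (k+1) - S.a k)
      = S.a (2*S.kI-1) - S.a 0 := by
    rw [Finset.sum_range_sub (fun k => S.a k)]
  rw [sum_parity (fun k => S.a (k+1) - S.a k) S.kI hk] at tele
  have e1 : ∀ i, S.a (2*i+1) - S.a (2*i) = S.a (2*i+1) - S.a (2*i) := fun _ => rfl
  unfold lam
  have : (∑ i ∈ Finset.range S.kI, (S.a (2*i+0+1) - S.a (2*i))) +
      ∑ i ∈ Finset.range (S.kI-1), (S.a (2*i+1+1) - S.a (2*i+1))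
      = S.a (2*S.kI-1) - S.a 0 := tele
  simp only [Nat.add_zero] at this
  have h2 : ∑ i ∈ Finset.range (S.kI-1), (S.a (2*i+2) - S.a (2*i+1))
      = ∑ i ∈ Finset.range (S.kI-1), (S.a (2*i+1+1) - S.a (2*i+1)) := by
    apply Finset.sum_congr rfl; intro i _; norm_num
  rw [h2]
  linarith

lemma lam_lt_one : S.lam < 1 := by
  have hk := S.hkI
  have hg := S.gapsum
  have h0 := S.ha0
  have h1 := S.ha1
  rcases Nat.lt_or_ge 1 S.kI with hk2 | hk2
  · -- kI ≥ 2 : a middle gap is positive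
    have hpos : 0 < ∑ i ∈ Finset.range (S.kI - 1), (S.a (2*i+2) - S.a (2*i+1)) := by
      apply Finset.sum_pos'
      · intro i hi
        have := S.a_strict (i := 2*i+1) (j := 2*i+2) (by omega)
          (by have := Finset.mem_range.mp hi; omega)
        linarith
      · refine ⟨0, Finset.mem_range.mpr (by omega), ?_⟩
        have := S.a_strict (i := 1) (j := 2) (by omega) (by omega)
        norm_num
        linarith
    linarith
  · -- kI = 1
    have hk1 : S.kI = 1 := by omega
    obtain ⟨x, hx⟩ := S.hkJ
    have hxI : x ∉ Set.Icc (S.a 0) (S.a 1) := by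
      intro h
      refine hx.2 ?_
      simp only [Set.mem_iUnion, Finset.mem_range]
      exact ⟨0, by omega, by simpa using h⟩
    have hx1 := hx.1
    simp only [Set.mem_Icc, Set.mem_diff] at hx1
    have hlam : S.lam = S.a 1 - S.a 0 := by
      unfold lam; rw [hk1]; simp
    have ha1' : S.a 1 ≤ 1 := S.a_le_one 1 (by omega)
    rcases lt_or_ge x (S.a 0) with h | h
    · rw [hlam]; linarith [hx1.1]
    · have h2 : S.a 1 < x := by
        by_contra hc; push_neg at hc; exact hxI ⟨h, hc⟩
      rw [hlam]; linarith [hx1.2, S.ha0]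

end CantorData
namespace CantorData

variable (S : CantorData)

lemma affine_preimage_vol (s c : ℝ) (hs : s ≠ 0) (A : Set ℝ) :
    volume ((fun x => s * x + c) ⁻¹' A) = ENNReal.ofReal |s|⁻¹ * volume A := by
  have : (fun x => s * x + c) ⁻¹' A = (fun x => s * x) ⁻¹' ((fun y => y + c) ⁻¹' A) := rfl
  rw [this, Real.volume_preimage_mul_left hs, measure_preimage_add_right]
  rw [abs_inv]

/-- Uniform single-branch volume lemma. -/
lemma branch_vol {P : Set ℝ} {s c : ℝ} (hs : s ≠ 0)
    (hf : ∀ x ∈ P, S.G x = s * x + c)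
    (hsur : Set.SurjOn (fun x => s * x + c) P (Set.Ioo 0 1))
    {T : Set ℝ} (hT : MeasurableSet T) (hT1 : T ⊆ Set.Icc (0:ℝ) 1) :
    MeasurableSet (P ∩ S.G ⁻¹' T) ∧
      volume (P ∩ S.G ⁻¹' T) = ENNReal.ofReal |s|⁻¹ * volume T := by
  set f : ℝ → ℝ := fun x => s * x + c with hfdef
  have hinj : Function.Injective f := fun x y h => by
    simp only [hfdef] at h
    have : s * x = s * y := by linarith
    exact mul_left_cancel₀ hs this
  have hlow : f ⁻¹' (T ∩ Set.Ioo 0 1) ⊆ P ∩ S.G ⁻¹' T := by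
    intro x hx
    obtain ⟨p, hp, hfp⟩ := hsur hx.2
    have : p = x := hinj hfp.symm ▸ rfl
    have hxP : x ∈ P := by rwa [hinj hfp] at hp
    exact ⟨hxP, by simp only [Set.mem_preimage]; rw [hf x hxP]; exact hx.1⟩
  have hup : P ∩ S.G ⁻¹' T ⊆ f ⁻¹' (T ∩ Set.Ioo 0 1) ∪ f ⁻¹' {0, 1} := by
    intro x hx
    have hfx : f x ∈ T := by
      have := hf x hx.1
      simp only [hfdef]
      rw [← this]; exact hx.2
    have h01 := hT1 hfx
    rcases eq_or_lt_of_le h01.1 with h | h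
    · exact Or.inr (Or.inl h.symm)
    rcases eq_or_lt_of_le h01.2 with h' | h'
    · exact Or.inr (Or.inr h')
    exact Or.inl ⟨hfx, h, h'⟩
  have hfin : (f ⁻¹' ({0, 1} : Set ℝ)).Finite := by
    exact Set.Finite.preimage (Function.Injective.injOn hinj) (Set.toFinite _)
  have hmf : Measurable f := by fun_prop
  have hmeq : P ∩ S.G ⁻¹' T = f ⁻¹' (T ∩ Set.Ioo 0 1) ∪ ((P ∩ S.G ⁻¹' T) ∩ f ⁻¹' {0, 1}) := by
    apply Set.Subset.antisymm
    · intro x hx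
      rcases hup hx with h | h
      · exact Or.inl h
      · exact Or.inr ⟨hx, h⟩
    · intro x hx
      rcases hx with h | h
      · exact hlow h
      · exact h.1
  have hm1 : MeasurableSet (f ⁻¹' (T ∩ Set.Ioo 0 1)) :=
    hmf (hT.inter measurableSet_Ioo)
  have hm2 : MeasurableSet ((P ∩ S.G ⁻¹' T) ∩ f ⁻¹' {0, 1}) :=
    (hfin.subset Set.inter_subset_right).measurableSet
  constructor
  · rw [hmeq]; exact hm1.union hm2
  · rw [hmeq]
    have hnull : volume ((P ∩ S.G ⁻¹' T) ∩ f ⁻¹' {0, 1}) = 0 :=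
      measure_mono_null Set.inter_subset_right (hfin.measure_zero _)
    have hu : volume (f ⁻¹' (T ∩ Set.Ioo 0 1) ∪ (P ∩ S.G ⁻¹' T) ∩ f ⁻¹' {0, 1})
        = volume (f ⁻¹' (T ∩ Set.Ioo 0 1)) :=
      le_antisymm (le_trans (measure_union_le _ _) (by rw [hnull, add_zero]))
        (measure_mono Set.subset_union_left)
    rw [hu, affine_preimage_vol s c hs]
    congr 1
    have : T = (T ∩ Set.Ioo 0 1) ∪ (T ∩ {0, 1}) := by
      apply Set.Subset.antisymm
      · intro x hx
        have h01 := hT1 hx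
        rcases eq_or_lt_of_le h01.1 with h | h
        · exact Or.inr ⟨hx, Or.inl h.symm⟩
        rcases eq_or_lt_of_le h01.2 with h' | h'
        · exact Or.inr ⟨hx, Or.inr h'⟩
        exact Or.inl ⟨hx, h, h'⟩
      · rintro x (h | h) <;> exact h.1
    conv_rhs => rw [this]
    have hz : volume (T ∩ ({0,1} : Set ℝ)) = 0 := measure_mono_null Set.inter_subset_right
      ((Set.toFinite ({0,1} : Set ℝ)).measure_zero _)
    exact (le_antisymm (le_trans (measure_union_le _ _) (by rw [hz, add_zero]))
      (measure_mono Set.subset_union_left)).symm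

end CantorData
namespace CantorData

variable (S : CantorData)

lemma Ii_branch (i : ℕ) (hi : i < S.kI) {T : Set ℝ} (hT : MeasurableSet T)
    (hT1 : T ⊆ Set.Icc (0:ℝ) 1) :
    MeasurableSet (Set.Icc (S.a (2*i)) (S.a (2*i+1)) ∩ S.G ⁻¹' T) ∧
      volume (Set.Icc (S.a (2*i)) (S.a (2*i+1)) ∩ S.G ⁻¹' T)
        = ENNReal.ofReal (S.a (2*i+1) - S.a (2*i)) * volume T := by
  obtain ⟨s, c, hlen, haff, hbij⟩ := S.hGI i hi
  have hlp : 0 < S.a (2*i+1) - S.a (2*i) := S.Ii_len_pos hi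
  have hs : s ≠ 0 := by
    intro h; rw [h] at hlen; norm_num at hlen
  have hsur : Set.SurjOn (fun x => s * x + c) (Set.Icc (S.a (2*i)) (S.a (2*i+1)))
      (Set.Ioo 0 1) := by
    intro y hy
    obtain ⟨x, hx, hGx⟩ := hbij.surjOn (Set.Ioo_subset_Icc_self hy)
    refine ⟨x, hx, ?_⟩
    show s * x + c = y
    rw [← haff x hx]; exact hGx
  have h := S.branch_vol hs haff hsur hT hT1
  have hinv : |s|⁻¹ = S.a (2*i+1) - S.a (2*i) := by
    have habs : 0 < |s| := abs_pos.mpr hs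
    field_simp
    rw [mul_comm] at hlen
    linarith [hlen]
  rw [hinv] at h
  exact h

lemma IU_step {T : Set ℝ} (hT : MeasurableSet T) (hT1 : T ⊆ Set.Icc (0:ℝ) 1) :
    MeasurableSet (S.IU ∩ S.G ⁻¹' T) ∧
      volume (S.IU ∩ S.G ⁻¹' T) = ENNReal.ofReal S.lam * volume T := by
  have hdec : S.IU ∩ S.G ⁻¹' T
      = ⋃ i ∈ Finset.range S.kI, (Set.Icc (S.a (2*i)) (S.a (2*i+1)) ∩ S.G ⁻¹' T) := by
    simp only [IU, Set.iUnion_inter]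
  have hmeas : ∀ i ∈ Finset.range S.kI,
      MeasurableSet (Set.Icc (S.a (2*i)) (S.a (2*i+1)) ∩ S.G ⁻¹' T) :=
    fun i hi => (S.Ii_branch i (Finset.mem_range.mp hi) hT hT1).1
  have hdisj : Set.PairwiseDisjoint (↑(Finset.range S.kI))
      (fun i => Set.Icc (S.a (2*i)) (S.a (2*i+1)) ∩ S.G ⁻¹' T) := by
    intro i hi j hj hij
    simp only [Finset.coe_range, Set.mem_Iio] at hi hj
    apply Set.disjoint_left.mpr
    intro x hx hx'
    rcases Nat.lt_or_ge i j with h | h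
    · have : S.a (2*i+1) < S.a (2*j) := S.a_strict (by omega) (by omega)
      have := hx.1.2; have := hx'.1.1; linarith
    · have hji : j < i := by omega
      have : S.a (2*j+1) < S.a (2*i) := S.a_strict (by omega) (by omega)
      have := hx'.1.2; have := hx.1.1; linarith
  constructor
  · rw [hdec]; exact Finset.measurableSet_biUnion _ hmeas
  · rw [hdec, measure_biUnion_finset hdisj hmeas]
    have : ∀ i ∈ Finset.range S.kI,
        volume (Set.Icc (S.a (2*i)) (S.a (2*i+1)) ∩ S.G ⁻¹' T)
          = ENNReal.ofReal (S.a (2*i+1) - S.a (2*i)) * volume T :=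
      fun i hi => (S.Ii_branch i (Finset.mem_range.mp hi) hT hT1).2
    rw [Finset.sum_congr rfl this, ← Finset.sum_mul]
    congr 1
    rw [← ENNReal.ofReal_sum_of_nonneg]
    · rfl
    · intro i hi; linarith [S.Ii_len_pos (Finset.mem_range.mp hi)]

lemma left_not_IU {x : ℝ} (hx : x ∈ Set.Ico (0:ℝ) (S.a 0)) : x ∉ S.IU := by
  intro h
  simp only [IU, Set.mem_iUnion, Finset.mem_range] at h
  obtain ⟨i, hi, h1, _⟩ := h
  have : S.a 0 ≤ S.a (2*i) := S.a_mono (Nat.zero_le _) (by omega)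
  have := hx.2; linarith

lemma right_not_IU {x : ℝ} (hx : x ∈ Set.Ioc (S.a (2*S.kI-1)) 1) : x ∉ S.IU := by
  intro h
  simp only [IU, Set.mem_iUnion, Finset.mem_range] at h
  obtain ⟨i, hi, _, h2⟩ := h
  have : S.a (2*i+1) ≤ S.a (2*S.kI-1) := S.a_mono (by omega) (by have := S.hkI; omega)
  have := hx.1; linarith

lemma mid_not_IU {i : ℕ} (hi : i + 1 < S.kI) {x : ℝ}
    (hx : x ∈ Set.Ioo (S.a (2*i+1)) (S.a (2*i+2))) : x ∉ S.IU := by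
  intro h
  simp only [IU, Set.mem_iUnion, Finset.mem_range] at h
  obtain ⟨i', hi', h1, h2⟩ := h
  rcases le_or_gt i' i with h' | h'
  · have : S.a (2*i'+1) ≤ S.a (2*i+1) := S.a_mono (by omega) (by omega)
    have := hx.1; linarith
  · have : S.a (2*i+2) ≤ S.a (2*i') := S.a_mono (by omega) (by omega)
    have := hx.2; linarith

lemma location {x : ℝ} (hx : x ∈ Set.Icc (0:ℝ) 1) (hIU : x ∉ S.IU) :
    x ∈ Set.Ico 0 (S.a 0) ∨ x ∈ Set.Ioc (S.a (2*S.kI-1)) 1 ∨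
      ∃ i, i + 1 < S.kI ∧ x ∈ Set.Ioo (S.a (2*i+1)) (S.a (2*i+2)) := by
  have hk := S.hkI
  have hmem : ∀ i < S.kI, ¬(S.a (2*i) ≤ x ∧ x ≤ S.a (2*i+1)) := by
    intro i hi h
    exact hIU (Set.mem_biUnion (Finset.mem_range.mpr hi) (Set.mem_Icc.mpr h))
  rcases lt_or_ge x (S.a 0) with h0 | h0
  · exact Or.inl ⟨hx.1, h0⟩
  right
  set Fs := (Finset.range (2*S.kI)).filter (fun i => S.a i ≤ x) with hFs
  have h0F : (0:ℕ) ∈ Fs := by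
    simp only [hFs, Finset.mem_filter, Finset.mem_range]
    exact ⟨by omega, h0⟩
  have hne : Fs.Nonempty := ⟨0, h0F⟩
  set M := Fs.max' hne with hM
  have hMF : M ∈ Fs := Fs.max'_mem hne
  have hMlt : M < 2*S.kI := by
    have := (Finset.mem_filter.mp hMF).1; exact Finset.mem_range.mp this
  have hMle : S.a M ≤ x := (Finset.mem_filter.mp hMF).2
  have hmax : ∀ i, i < 2*S.kI → S.a i ≤ x → i ≤ M := by
    intro i h1 h2
    exact Fs.le_max' i (Finset.mem_filter.mpr ⟨Finset.mem_range.mpr h1, h2⟩)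
  rcases Nat.even_or_odd M with ⟨i, hM2⟩ | ⟨i, hM2⟩
  · -- M = 2i, impossible
    exfalso
    have hM2' : M = 2*i := by omega
    have hik : i < S.kI := by omega
    have hlt : x < S.a (2*i+1) := by
      by_contra h
      push_neg at h
      have := hmax (2*i+1) (by omega) h
      omega
    rw [hM2'] at hMle
    exact hmem i hik ⟨hMle, le_of_lt hlt⟩
  · -- M = 2i+1
    have hM2' : M = 2*i+1 := by omega
    have hik : i < S.kI := by omega
    have hMa : S.a (2*i+1) ≤ x := by rw [hM2'] at hMle; exact hMle
    have hxne : S.a (2*i+1) ≠ x := by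
      intro h
      exact hmem i hik ⟨h ▸ S.a_mono (by omega) (by omega), h.ge⟩
    have hMlt' : S.a (2*i+1) < x := lt_of_le_of_ne hMa hxne
    rcases Nat.lt_or_ge M (2*S.kI-1) with hM3 | hM3
    · right
      refine ⟨i, by omega, hMlt', ?_⟩
      by_contra h
      push_neg at h
      have := hmax (2*i+2) (by omega) h
      omega
    · left
      refine ⟨?_, hx.2⟩
      have h21 : 2*S.kI - 1 = 2*i+1 := by omega
      rw [h21]
      exact hMlt'

lemma compl_IU : Set.Icc (0:ℝ) 1 \ S.IU =
    (Set.Ico 0 (S.a 0) ∪ Set.Ioc (S.a (2*S.kI-1)) 1) ∪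
      ⋃ i ∈ Finset.range (S.kI-1), Set.Ioo (S.a (2*i+1)) (S.a (2*i+2)) := by
  have hk := S.hkI
  apply Set.Subset.antisymm
  · intro x hx
    rcases S.location hx.1 hx.2 with h | h | ⟨i, hi, h⟩
    · exact Or.inl (Or.inl h)
    · exact Or.inl (Or.inr h)
    · exact Or.inr (Set.mem_biUnion (Finset.mem_range.mpr (by omega)) h)
  · intro x hx
    rcases hx with (h | h) | h
    · refine ⟨⟨h.1, le_trans (le_of_lt h.2) (S.a_le_one 0 (by omega))⟩, S.left_not_IU h⟩
    · refine ⟨⟨le_trans (S.a_nonneg _ (by omega)) (le_of_lt h.1), h.2⟩, S.right_not_IU h⟩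
    · simp only [Set.mem_iUnion, Finset.mem_range] at h
      obtain ⟨i, hi, h⟩ := h
      have hi' : i + 1 < S.kI := by omega
      refine ⟨⟨?_, ?_⟩, S.mid_not_IU hi' h⟩
      · exact le_trans (S.a_nonneg (2*i+1) (by omega)) (le_of_lt h.1)
      · exact le_trans (le_of_lt h.2) (S.a_le_one (2*i+2) (by omega))

end CantorData
namespace CantorData

variable (S : CantorData)

lemma left_branch {T : Set ℝ} (hT : MeasurableSet T) (hT1 : T ⊆ Set.Icc (0:ℝ) 1) :
    MeasurableSet (Set.Ico 0 (S.a 0) ∩ S.G ⁻¹' T) ∧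
      volume (Set.Ico 0 (S.a 0) ∩ S.G ⁻¹' T) = ENNReal.ofReal (S.a 0) * volume T := by
  rcases eq_or_lt_of_le S.ha0 with h | h
  · rw [← h]
    simp [Set.Ico_self]
  · obtain ⟨s, c, hlen, haff, hsur⟩ := S.hGJleft h
    have hs : s ≠ 0 := by intro hc; rw [hc] at hlen; norm_num at hlen
    have hsur' : Set.SurjOn (fun x => s * x + c) (Set.Ico 0 (S.a 0)) (Set.Ioo 0 1) := by
      intro y hy
      obtain ⟨x, hx, hGx⟩ := hsur hy
      refine ⟨x, hx, ?_⟩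
      show s * x + c = y
      rw [← haff x hx]; exact hGx
    have hres := S.branch_vol hs haff hsur' hT hT1
    have hinv : |s|⁻¹ = S.a 0 := by
      have habs : 0 < |s| := abs_pos.mpr hs
      field_simp
      rw [mul_comm] at hlen
      linarith
    rw [hinv] at hres
    exact hres

lemma right_branch {T : Set ℝ} (hT : MeasurableSet T) (hT1 : T ⊆ Set.Icc (0:ℝ) 1) :
    MeasurableSet (Set.Ioc (S.a (2*S.kI-1)) 1 ∩ S.G ⁻¹' T) ∧
      volume (Set.Ioc (S.a (2*S.kI-1)) 1 ∩ S.G ⁻¹' T)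
        = ENNReal.ofReal (1 - S.a (2*S.kI-1)) * volume T := by
  rcases eq_or_lt_of_le S.ha1 with h | h
  · rw [h]
    simp [Set.Ioc_self]
  · obtain ⟨s, c, hlen, haff, hsur⟩ := S.hGJright h
    have hs : s ≠ 0 := by intro hc; rw [hc] at hlen; norm_num at hlen
    have hsur' : Set.SurjOn (fun x => s * x + c) (Set.Ioc (S.a (2*S.kI-1)) 1)
        (Set.Ioo 0 1) := by
      intro y hy
      obtain ⟨x, hx, hGx⟩ := hsur hy
      refine ⟨x, hx, ?_⟩
      show s * x + c = y
      rw [← haff x hx]; exact hGx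
    have hres := S.branch_vol hs haff hsur' hT hT1
    have hinv : |s|⁻¹ = 1 - S.a (2*S.kI-1) := by
      have habs : 0 < |s| := abs_pos.mpr hs
      field_simp
      rw [mul_comm] at hlen
      linarith
    rw [hinv] at hres
    exact hres

lemma mid_branch (i : ℕ) (hi : i + 1 < S.kI) {T : Set ℝ} (hT : MeasurableSet T)
    (hT1 : T ⊆ Set.Icc (0:ℝ) 1) :
    MeasurableSet (Set.Ioo (S.a (2*i+1)) (S.a (2*i+2)) ∩ S.G ⁻¹' T) ∧
      volume (Set.Ioo (S.a (2*i+1)) (S.a (2*i+2)) ∩ S.G ⁻¹' T)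
        = ENNReal.ofReal (S.a (2*i+2) - S.a (2*i+1)) * volume T := by
  obtain ⟨s, c, hlen, haff, hsur⟩ := S.hGJmid i hi
  have hgap : 0 < S.a (2*i+2) - S.a (2*i+1) := by
    have := S.a_strict (i := 2*i+1) (j := 2*i+2) (by omega) (by omega)
    linarith
  have hs : s ≠ 0 := by
    intro hc; rw [hc] at hlen; norm_num at hlen
  have hsur' : Set.SurjOn (fun x => s * x + c) (Set.Ioo (S.a (2*i+1)) (S.a (2*i+2)))
      (Set.Ioo 0 1) := by
    intro y hy
    obtain ⟨x, hx, hGx⟩ := hsur hy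
    refine ⟨x, hx, ?_⟩
    show s * x + c = y
    rw [← haff x hx]; exact hGx
  have hres := S.branch_vol hs haff hsur' hT hT1
  have hinv : |s|⁻¹ = S.a (2*i+2) - S.a (2*i+1) := by
    have habs : 0 < |s| := abs_pos.mpr hs
    field_simp
    rw [mul_comm] at hlen
    linarith
  rw [hinv] at hres
  exact hres

lemma J_step {T : Set ℝ} (hT : MeasurableSet T) (hT1 : T ⊆ Set.Icc (0:ℝ) 1) :
    MeasurableSet ((Set.Icc (0:ℝ) 1 \ S.IU) ∩ S.G ⁻¹' T) ∧
      volume ((Set.Icc (0:ℝ) 1 \ S.IU) ∩ S.G ⁻¹' T)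
        = ENNReal.ofReal (1 - S.lam) * volume T := by
  have hk := S.hkI
  have hdec : (Set.Icc (0:ℝ) 1 \ S.IU) ∩ S.G ⁻¹' T
      = ((Set.Ico 0 (S.a 0) ∩ S.G ⁻¹' T) ∪ (Set.Ioc (S.a (2*S.kI-1)) 1 ∩ S.G ⁻¹' T)) ∪
        ⋃ i ∈ Finset.range (S.kI-1), (Set.Ioo (S.a (2*i+1)) (S.a (2*i+2)) ∩ S.G ⁻¹' T) := by
    rw [S.compl_IU]
    rw [Set.union_inter_distrib_right, Set.union_inter_distrib_right, Set.iUnion_inter]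
    congr 1
    apply Set.iUnion_congr
    intro i
    rw [Set.iUnion_inter]
  have hL := S.left_branch hT hT1
  have hR := S.right_branch hT hT1
  have hM : ∀ i ∈ Finset.range (S.kI-1),
      MeasurableSet (Set.Ioo (S.a (2*i+1)) (S.a (2*i+2)) ∩ S.G ⁻¹' T) :=
    fun i hi => (S.mid_branch i (by have := Finset.mem_range.mp hi; omega) hT hT1).1
  have hMd : Set.PairwiseDisjoint (↑(Finset.range (S.kI-1)))
      (fun i => Set.Ioo (S.a (2*i+1)) (S.a (2*i+2)) ∩ S.G ⁻¹' T) := by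
    intro i hi j hj hij
    simp only [Finset.coe_range, Set.mem_Iio] at hi hj
    apply Set.disjoint_left.mpr
    intro x hx hx'
    rcases Nat.lt_or_ge i j with h | h
    · have : S.a (2*i+2) ≤ S.a (2*j+1) := S.a_mono (by omega) (by omega)
      have := hx.1.2; have := hx'.1.1; linarith
    · have hji : j < i := by omega
      have : S.a (2*j+2) ≤ S.a (2*i+1) := S.a_mono (by omega) (by omega)
      have := hx'.1.2; have := hx.1.1; linarith
  have hMU : MeasurableSet (⋃ i ∈ Finset.range (S.kI-1),
      (Set.Ioo (S.a (2*i+1)) (S.a (2*i+2)) ∩ S.G ⁻¹' T)) :=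
    Finset.measurableSet_biUnion _ hM
  have hdLR : Disjoint (Set.Ico 0 (S.a 0) ∩ S.G ⁻¹' T)
      (Set.Ioc (S.a (2*S.kI-1)) 1 ∩ S.G ⁻¹' T) := by
    apply Set.disjoint_left.mpr
    intro x hx hx'
    have h1 := hx.1.2
    have h2 := hx'.1.1
    have : S.a 0 ≤ S.a (2*S.kI-1) := S.a_mono (by omega) (by omega)
    linarith
  have hdLRM : Disjoint ((Set.Ico 0 (S.a 0) ∩ S.G ⁻¹' T) ∪ (Set.Ioc (S.a (2*S.kI-1)) 1 ∩ S.G ⁻¹' T))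
      (⋃ i ∈ Finset.range (S.kI-1), (Set.Ioo (S.a (2*i+1)) (S.a (2*i+2)) ∩ S.G ⁻¹' T)) := by
    apply Set.disjoint_left.mpr
    intro x hx hx'
    simp only [Set.mem_iUnion, Finset.mem_range] at hx'
    obtain ⟨i, hi, hx'⟩ := hx'
    rcases hx with h | h
    · have : S.a 0 ≤ S.a (2*i+1) := S.a_mono (by omega) (by omega)
      have := h.1.2; have := hx'.1.1; linarith
    · have : S.a (2*i+2) ≤ S.a (2*S.kI-1) := S.a_mono (by omega) (by omega)
      have := h.1.1; have := hx'.1.2; linarith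
  constructor
  · rw [hdec]
    exact ((hL.1.union hR.1).union hMU)
  · rw [hdec, measure_union hdLRM hMU, measure_union hdLR hR.1,
      measure_biUnion_finset hMd hM, hL.2, hR.2]
    have hMv : ∀ i ∈ Finset.range (S.kI-1),
        volume (Set.Ioo (S.a (2*i+1)) (S.a (2*i+2)) ∩ S.G ⁻¹' T)
          = ENNReal.ofReal (S.a (2*i+2) - S.a (2*i+1)) * volume T :=
      fun i hi => (S.mid_branch i (by have := Finset.mem_range.mp hi; omega) hT hT1).2
    rw [Finset.sum_congr rfl hMv, ← Finset.sum_mul, ← add_mul, ← add_mul]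
    congr 1
    rw [← ENNReal.ofReal_sum_of_nonneg (fun i hi => by
      have := S.a_strict (i := 2*i+1) (j := 2*i+2) (by omega)
        (by have := Finset.mem_range.mp hi; omega)
      linarith)]
    rw [← ENNReal.ofReal_add S.ha0 (by linarith [S.ha1]), ← ENNReal.ofReal_add (by
      have : S.a 0 ≤ S.a (2*S.kI-1) := S.a_mono (by omega) (by omega)
      linarith [S.ha0, S.ha1]) (Finset.sum_nonneg (fun i hi => by
        have := S.a_strict (i := 2*i+1) (j := 2*i+2) (by omega)
          (by have := Finset.mem_range.mp hi; omega)
        linarith))]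
    congr 1
    have := S.gapsum
    linarith

end CantorData
namespace CantorData

variable (S : CantorData)

lemma iter_mem_Icc {x : ℝ} (hx : x ∈ Set.Icc (0:ℝ) 1) (k : ℕ) :
    S.G^[k] x ∈ Set.Icc (0:ℝ) 1 := by
  induction k with
  | zero => simpa using hx
  | succ m ih =>
    rw [Function.iterate_succ_apply']
    exact S.hGmaps ih

lemma invariance : ∀ (k : ℕ) {A : Set ℝ}, MeasurableSet A → A ⊆ Set.Icc (0:ℝ) 1 →
    MeasurableSet (Set.Icc (0:ℝ) 1 ∩ (S.G^[k]) ⁻¹' A) ∧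
      volume (Set.Icc (0:ℝ) 1 ∩ (S.G^[k]) ⁻¹' A) = volume A := by
  intro k
  induction k with
  | zero =>
    intro A hA hA1
    simp only [Function.iterate_zero, Set.preimage_id', Set.preimage_id]
    rw [Set.inter_eq_right.mpr hA1]
    exact ⟨hA, rfl⟩
  | succ m ih =>
    intro A hA hA1
    obtain ⟨hTm, hTv⟩ := ih hA hA1
    set T' := Set.Icc (0:ℝ) 1 ∩ (S.G^[m]) ⁻¹' A with hT'
    have hT'1 : T' ⊆ Set.Icc (0:ℝ) 1 := Set.inter_subset_left
    have hdec : Set.Icc (0:ℝ) 1 ∩ (S.G^[m+1]) ⁻¹' A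
        = (S.IU ∩ S.G ⁻¹' T') ∪ ((Set.Icc (0:ℝ) 1 \ S.IU) ∩ S.G ⁻¹' T') := by
      ext x
      simp only [Set.mem_inter_iff, Set.mem_union, Set.mem_preimage, Set.mem_diff,
        Function.iterate_succ_apply]
      constructor
      · rintro ⟨hx1, hx2⟩
        have hGx : S.G x ∈ Set.Icc (0:ℝ) 1 := S.hGmaps hx1
        by_cases hxi : x ∈ S.IU
        · exact Or.inl ⟨hxi, hGx, hx2⟩
        · exact Or.inr ⟨⟨hx1, hxi⟩, hGx, hx2⟩
      · rintro (⟨hx1, _, hx2⟩ | ⟨⟨hx1, _⟩, _, hx2⟩)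
        · exact ⟨S.IU_subset hx1, hx2⟩
        · exact ⟨hx1, hx2⟩
    obtain ⟨hI1, hI2⟩ := S.IU_step hTm hT'1
    obtain ⟨hJ1, hJ2⟩ := S.J_step hTm hT'1
    have hdisj : Disjoint (S.IU ∩ S.G ⁻¹' T') ((Set.Icc (0:ℝ) 1 \ S.IU) ∩ S.G ⁻¹' T') := by
      apply Set.disjoint_left.mpr
      intro x hx hx'
      exact hx'.1.2 hx.1
    constructor
    · rw [hdec]; exact hI1.union hJ1
    · rw [hdec, measure_union hdisj hJ1, hI2, hJ2, ← add_mul,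
        ← ENNReal.ofReal_add (le_of_lt S.lam_pos) (by linarith [S.lam_lt_one])]
      norm_num
      exact hTv

lemma Lam_eq_succ (m : ℕ) : S.Lam (m+1) = S.IU ∩ S.G ⁻¹' (S.Lam m) := by
  ext x
  simp only [Lam, Set.mem_setOf_eq, Set.mem_inter_iff, Set.mem_preimage, Set.mem_sep_iff]
  constructor
  · rintro ⟨hx1, hx2⟩
    have hx0 : x ∈ S.IU := by simpa using hx2 0 (by omega)
    refine ⟨hx0, S.hGmaps hx1, ?_⟩
    intro i hi
    rw [← Function.iterate_succ_apply]
    exact hx2 (i+1) (by omega)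
  · rintro ⟨hx1, hx2, hx3⟩
    refine ⟨S.IU_subset hx1, ?_⟩
    intro i hi
    cases i with
    | zero => simpa using hx1
    | succ p =>
      rw [Function.iterate_succ_apply]
      exact hx3 p (by omega)

lemma Lam_meas_vol (m : ℕ) :
    MeasurableSet (S.Lam m) ∧ volume (S.Lam m) = ENNReal.ofReal (S.lam ^ m) := by
  induction m with
  | zero =>
    constructor
    · have : S.Lam 0 = Set.Icc (0:ℝ) 1 := by
        ext x; simp [Lam]
      rw [this]; exact measurableSet_Icc
    · have : S.Lam 0 = Set.Icc (0:ℝ) 1 := by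
        ext x; simp [Lam]
      rw [this]; simp [Real.volume_Icc]
  | succ m ih =>
    have hsub : S.Lam m ⊆ Set.Icc (0:ℝ) 1 := fun x hx => hx.1
    obtain ⟨h1, h2⟩ := S.IU_step ih.1 hsub
    rw [S.Lam_eq_succ m]
    refine ⟨h1, ?_⟩
    rw [h2, ih.2, ← ENNReal.ofReal_mul (le_of_lt S.lam_pos)]
    ring_nf

/-- points following the scheme exactly `m` steps then escaping -/
def Eset (m : ℕ) : Set ℝ :=
  {x ∈ Set.Icc (0:ℝ) 1 | (∀ i < m, S.G^[i] x ∈ S.IU) ∧ S.G^[m] x ∉ S.IU}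

lemma Eset_subset (m : ℕ) : S.Eset m ⊆ Set.Icc (0:ℝ) 1 := fun x hx => hx.1

lemma Eset_zero : S.Eset 0 = Set.Icc (0:ℝ) 1 \ S.IU := by
  ext x
  simp only [Eset, Set.mem_setOf_eq, Set.mem_diff, Set.mem_sep_iff]
  constructor
  · rintro ⟨h1, _, h3⟩; exact ⟨h1, by simpa using h3⟩
  · rintro ⟨h1, h2⟩; exact ⟨h1, by omega, by simpa using h2⟩

lemma Eset_succ (m : ℕ) : S.Eset (m+1) = S.IU ∩ S.G ⁻¹' (S.Eset m) := by
  ext x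
  simp only [Eset, Set.mem_setOf_eq, Set.mem_inter_iff, Set.mem_preimage, Set.mem_sep_iff]
  constructor
  · rintro ⟨hx1, hx2, hx3⟩
    have hx0 : x ∈ S.IU := by simpa using hx2 0 (by omega)
    refine ⟨hx0, S.hGmaps hx1, ?_, ?_⟩
    · intro i hi
      rw [← Function.iterate_succ_apply]
      exact hx2 (i+1) (by omega)
    · rw [← Function.iterate_succ_apply]
      exact hx3
  · rintro ⟨hx1, hx2, hx3, hx4⟩
    refine ⟨S.IU_subset hx1, ?_, ?_⟩
    · intro i hi
      cases i with
      | zero => simpa using hx1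
      | succ p =>
        rw [Function.iterate_succ_apply]
        exact hx3 p (by omega)
    · rw [Function.iterate_succ_apply]
      exact hx4

/-- key independence property -/
lemma E_ind : ∀ (m k : ℕ), m < k → ∀ {A : Set ℝ}, MeasurableSet A → A ⊆ Set.Icc (0:ℝ) 1 →
    MeasurableSet (S.Eset m ∩ (S.G^[k]) ⁻¹' A) ∧
      volume (S.Eset m ∩ (S.G^[k]) ⁻¹' A)
        = ENNReal.ofReal (S.lam ^ m * (1 - S.lam)) * volume A := by
  intro m
  induction m with
  | zero =>
    intro k hk A hA hA1
    obtain ⟨k, rfl⟩ : ∃ p, k = p + 1 := ⟨k - 1, by omega⟩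
    have hdec : S.Eset 0 ∩ (S.G^[k+1]) ⁻¹' A
        = (Set.Icc (0:ℝ) 1 \ S.IU) ∩ S.G ⁻¹' (Set.Icc (0:ℝ) 1 ∩ (S.G^[k]) ⁻¹' A) := by
      rw [S.Eset_zero]
      ext x
      simp only [Set.mem_inter_iff, Set.mem_preimage, Set.mem_diff,
        Function.iterate_succ_apply]
      constructor
      · rintro ⟨hx1, hx2⟩
        exact ⟨hx1, S.hGmaps hx1.1, hx2⟩
      · rintro ⟨hx1, _, hx2⟩
        exact ⟨hx1, hx2⟩
    obtain ⟨hi1, hi2⟩ := S.invariance k hA hA1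
    obtain ⟨hj1, hj2⟩ := S.J_step hi1 Set.inter_subset_left
    rw [hdec]
    refine ⟨hj1, ?_⟩
    rw [hj2, hi2]
    norm_num
  | succ m ih =>
    intro k hk A hA hA1
    obtain ⟨k, rfl⟩ : ∃ p, k = p + 1 := ⟨k - 1, by omega⟩
    have hdec : S.Eset (m+1) ∩ (S.G^[k+1]) ⁻¹' A
        = S.IU ∩ S.G ⁻¹' (S.Eset m ∩ (S.G^[k]) ⁻¹' A) := by
      rw [S.Eset_succ]
      ext x
      simp only [Set.mem_inter_iff, Set.mem_preimage, Function.iterate_succ_apply]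
      tauto
    obtain ⟨hi1, hi2⟩ := ih k (by omega) hA hA1
    obtain ⟨hu1, hu2⟩ := S.IU_step hi1
      (fun z hz => S.Eset_subset m hz.1)
    rw [hdec]
    refine ⟨hu1, ?_⟩
    rw [hu2, hi2, ← mul_assoc, ← ENNReal.ofReal_mul (le_of_lt S.lam_pos)]
    ring_nf

lemma Eset_meas_vol (m : ℕ) :
    MeasurableSet (S.Eset m) ∧ volume (S.Eset m)
      = ENNReal.ofReal (S.lam ^ m * (1 - S.lam)) := by
  have h : S.Eset m ∩ (S.G^[m+1]) ⁻¹' (Set.Icc (0:ℝ) 1) = S.Eset m := by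
    apply Set.inter_eq_left.mpr
    intro x hx
    exact S.iter_mem_Icc hx.1 (m+1)
  obtain ⟨h1, h2⟩ := S.E_ind m (m+1) (by omega) measurableSet_Icc (le_refl _)
  rw [h] at h1 h2
  refine ⟨h1, ?_⟩
  rw [h2]
  simp [Real.volume_Icc]

end CantorData
namespace CantorData

variable (S : CantorData)

noncomputable def psiterm (x : ℝ) (i : ℕ) : ℝ :=
  if S.G^[i] x ∈ S.IU then 0 else (2:ℝ)⁻¹ ^ (i + 1)

lemma psi_eq (x : ℝ) : S.psi x = ∑' i, S.psiterm x i := rfl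

lemma psiterm_nonneg (x : ℝ) (i : ℕ) : 0 ≤ S.psiterm x i := by
  unfold psiterm
  split <;> positivity

lemma psiterm_le (x : ℝ) (i : ℕ) : S.psiterm x i ≤ (2:ℝ)⁻¹ ^ (i+1) := by
  unfold psiterm
  split
  · positivity
  · exact le_refl _

lemma geom_summable : Summable (fun i : ℕ => (2:ℝ)⁻¹ ^ (i+1)) := by
  have h := (summable_geometric_of_lt_one (by norm_num : (0:ℝ) ≤ 2⁻¹)
    (by norm_num : (2:ℝ)⁻¹ < 1)).mul_left (2:ℝ)⁻¹
  have he : (fun i : ℕ => (2:ℝ)⁻¹ ^ (i+1)) = fun i : ℕ => (2:ℝ)⁻¹ * (2:ℝ)⁻¹ ^ i := by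
    funext i; rw [pow_succ]; ring
  rw [he]
  exact h

lemma psi_summable (x : ℝ) : Summable (S.psiterm x) :=
  Summable.of_nonneg_of_le (S.psiterm_nonneg x) (S.psiterm_le x) geom_summable

lemma psi_nonneg (x : ℝ) : 0 ≤ S.psi x :=
  tsum_nonneg (S.psiterm_nonneg x)

lemma tail_geom (m : ℕ) : ∑' i : ℕ, (2:ℝ)⁻¹ ^ (i + m + 1) = (2:ℝ)⁻¹ ^ m := by
  have h1 : ∀ i : ℕ, (2:ℝ)⁻¹ ^ (i + m + 1) = (2:ℝ)⁻¹ ^ (m+1) * (2:ℝ)⁻¹ ^ i := by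
    intro i; rw [← pow_add]; ring_nf
  rw [tsum_congr h1, tsum_mul_left, tsum_geometric_of_lt_one (by norm_num) (by norm_num)]
  have : ((1:ℝ) - 2⁻¹)⁻¹ = 2 := by norm_num
  rw [this, pow_succ]
  ring

lemma psi_le {x : ℝ} {m : ℕ} (h : ∀ i < m, S.G^[i] x ∈ S.IU) :
    S.psi x ≤ (2:ℝ)⁻¹ ^ m := by
  rw [psi_eq]
  have hb : ∀ i, S.psiterm x i ≤ (if i < m then 0 else (2:ℝ)⁻¹ ^ (i+1)) := by
    intro i
    by_cases hi : i < m
    · simp only [hi, if_true]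
      unfold psiterm
      rw [if_pos (h i hi)]
    · simp only [hi, if_false]
      exact S.psiterm_le x i
  have hs2 : Summable (fun i => (if i < m then 0 else (2:ℝ)⁻¹ ^ (i+1))) := by
    apply Summable.of_nonneg_of_le _ _ geom_summable
    · intro i
      by_cases hi : i < m
      · simp [hi]
      · simp only [hi, if_false]
        positivity
    · intro i
      by_cases hi : i < m
      · simp only [hi, if_true]
        positivity
      · simp [hi]
  refine le_trans (Summable.tsum_le_tsum hb (S.psi_summable x) hs2) ?_
  have := Summable.sum_add_tsum_nat_add (f := fun i => (if i < m then 0 else (2:ℝ)⁻¹ ^ (i+1))) m hs2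
  rw [← this]
  have h0 : ∑ i ∈ Finset.range m, (if i < m then 0 else (2:ℝ)⁻¹ ^ (i+1)) = 0 := by
    apply Finset.sum_eq_zero
    intro i hi
    rw [if_pos (Finset.mem_range.mp hi)]
  rw [h0, zero_add]
  have h2 : ∀ i : ℕ, (if i + m < m then 0 else (2:ℝ)⁻¹ ^ (i+m+1)) = (2:ℝ)⁻¹ ^ (i+m+1) := by
    intro i; rw [if_neg (by omega)]
  rw [tsum_congr h2, tail_geom m]

lemma le_psi {x : ℝ} {e : ℕ} (h : S.G^[e] x ∉ S.IU) :
    (2:ℝ)⁻¹ ^ (e + 1) ≤ S.psi x := by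
  rw [psi_eq]
  have : S.psiterm x e = (2:ℝ)⁻¹ ^ (e+1) := by unfold psiterm; rw [if_neg h]
  rw [← this]
  exact Summable.le_tsum (S.psi_summable x) e (fun j _ => S.psiterm_nonneg x j)

lemma two_le_psi {x : ℝ} {e e' : ℕ} (h : S.G^[e] x ∉ S.IU) (h' : S.G^[e'] x ∉ S.IU)
    (hne : e ≠ e') : (2:ℝ)⁻¹ ^ (e + 1) + (2:ℝ)⁻¹ ^ (e' + 1) ≤ S.psi x := by
  rw [psi_eq]
  have h1 : S.psiterm x e = (2:ℝ)⁻¹ ^ (e+1) := by unfold psiterm; rw [if_neg h]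
  have h2 : S.psiterm x e' = (2:ℝ)⁻¹ ^ (e'+1) := by unfold psiterm; rw [if_neg h']
  have : (2:ℝ)⁻¹ ^ (e + 1) + (2:ℝ)⁻¹ ^ (e' + 1) = ∑ i ∈ ({e, e'} : Finset ℕ), S.psiterm x i := by
    rw [Finset.sum_pair hne, h1, h2]
  rw [this]
  exact Summable.sum_le_tsum _ (fun j _ => S.psiterm_nonneg x j) (S.psi_summable x)

lemma mes_apply (A : Set ℝ) : S.mes A = volume (A ∩ Set.Icc 0 1) := by
  unfold mes
  rw [Measure.restrict_apply' measurableSet_Icc]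

lemma mes_ne_top (A : Set ℝ) : S.mes A ≠ ⊤ := by
  rw [S.mes_apply]
  exact ne_top_of_le_ne_top (by simp [Real.volume_Icc] : volume (Set.Icc (0:ℝ) 1) ≠ ⊤)
    (measure_mono Set.inter_subset_right)

lemma F_nonneg (t : ℝ) : 0 ≤ S.F t := ENNReal.toReal_nonneg

lemma F_lower {x : ℝ} {e : ℕ} (h : S.G^[e] x ∉ S.IU) :
    S.lam ^ (e + 1) ≤ S.F (S.psi x) := by
  have hsub : S.Lam (e+1) ⊆ {z | S.psi z ≤ S.psi x} := by
    intro z hz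
    exact le_trans (S.psi_le hz.2) (S.le_psi h)
  have h1 : S.mes (S.Lam (e+1)) ≤ S.mes {z | S.psi z ≤ S.psi x} := measure_mono hsub
  have h2 : S.mes (S.Lam (e+1)) = ENNReal.ofReal (S.lam ^ (e+1)) := by
    rw [S.mes_apply, Set.inter_eq_left.mpr (fun z hz => hz.1), (S.Lam_meas_vol (e+1)).2]
  unfold F
  calc S.lam ^ (e+1) = (ENNReal.ofReal (S.lam ^ (e+1))).toReal :=
        (ENNReal.toReal_ofReal (pow_nonneg (le_of_lt S.lam_pos) _)).symm
    _ = (S.mes (S.Lam (e+1))).toReal := by rw [h2]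
    _ ≤ _ := ENNReal.toReal_mono (S.mes_ne_top _) h1

lemma F_upper {x : ℝ} {m : ℕ} (hm : 1 ≤ m) (h : ∀ i < m, S.G^[i] x ∈ S.IU) :
    S.F (S.psi x) ≤ S.lam ^ m := by
  set N : Set ℝ := ⋂ k : ℕ, (S.Eset (m-1) ∩ (S.G^[m]) ⁻¹' (S.Lam k)) with hN
  have hsub : {z | S.psi z ≤ S.psi x} ∩ Set.Icc 0 1 ⊆ S.Lam m ∪ N := by
    rintro z ⟨hz1, hz2⟩
    by_cases hzL : z ∈ S.Lam m
    · exact Or.inl hzL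
    right
    have hzpsi : S.psi z ≤ (2:ℝ)⁻¹ ^ m := le_trans hz1 (S.psi_le h)
    have hesc : ∃ i < m, S.G^[i] z ∉ S.IU := by
      by_contra hc
      push_neg at hc
      exact hzL ⟨hz2, hc⟩
    have hex : ∃ i, S.G^[i] z ∉ S.IU := ⟨hesc.choose, hesc.choose_spec.2⟩
    set i₀ := Nat.find hex with hi₀
    have hi₀esc : S.G^[i₀] z ∉ S.IU := Nat.find_spec hex
    have hi₀min : ∀ i < i₀, S.G^[i] z ∈ S.IU := fun i hi => by
      by_contra hc
      exact Nat.find_min hex hi hc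
    have hi₀lt : i₀ < m := by
      obtain ⟨i, hi, hie⟩ := hesc
      exact lt_of_le_of_lt (Nat.find_min' hex hie) hi
    have hlow : (2:ℝ)⁻¹ ^ (i₀+1) ≤ S.psi z := S.le_psi hi₀esc
    have hi₀eq : i₀ = m - 1 := by
      by_contra hc
      have h2 : i₀ + 1 < m := by omega
      have : ((2:ℝ)⁻¹) ^ m < (2:ℝ)⁻¹ ^ (i₀+1) := by
        apply pow_lt_pow_right_of_lt_one₀ (by norm_num) (by norm_num) (by omega)
      linarith
    have htail : ∀ i, m ≤ i → S.G^[i] z ∈ S.IU := by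
      intro i hi
      by_contra hc
      have := S.two_le_psi hi₀esc hc (by omega)
      have hp : (0:ℝ) < (2:ℝ)⁻¹ ^ (i+1) := by positivity
      have : (2:ℝ)⁻¹ ^ (i₀+1) + (2:ℝ)⁻¹ ^ (i+1) ≤ (2:ℝ)⁻¹ ^ m := le_trans this hzpsi
      have heq : i₀ + 1 = m := by omega
      rw [heq] at this
      linarith
    apply Set.mem_iInter.mpr
    intro k
    refine ⟨⟨hz2, hi₀eq ▸ hi₀min, hi₀eq ▸ hi₀esc⟩, ?_⟩
    simp only [Set.mem_preimage]
    refine ⟨S.iter_mem_Icc hz2 m, ?_⟩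
    intro i hi
    rw [← Function.iterate_add_apply]
    exact htail (i + m) (by omega)
  have hNzero : volume N = 0 := by
    have hbound : ∀ k : ℕ, volume N ≤
        ENNReal.ofReal (S.lam ^ (m-1) * (1 - S.lam)) * ENNReal.ofReal (S.lam ^ k) := by
      intro k
      calc volume N ≤ volume (S.Eset (m-1) ∩ (S.G^[m]) ⁻¹' (S.Lam k)) :=
            measure_mono (Set.iInter_subset _ k)
        _ = _ := by
            rw [(S.E_ind (m-1) m (by omega) (S.Lam_meas_vol k).1
              (fun z hz => hz.1)).2, (S.Lam_meas_vol k).2]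
    have htend : Filter.Tendsto
        (fun k : ℕ => ENNReal.ofReal (S.lam ^ (m-1) * (1 - S.lam)) * ENNReal.ofReal (S.lam ^ k))
        Filter.atTop (𝓝 0) := by
      have h1 : Filter.Tendsto (fun k : ℕ => ENNReal.ofReal (S.lam ^ k)) Filter.atTop (𝓝 0) := by
        have : ∀ k : ℕ, ENNReal.ofReal (S.lam ^ k) = (ENNReal.ofReal S.lam) ^ k := by
          intro k; rw [← ENNReal.ofReal_pow (le_of_lt S.lam_pos)]
        simp_rw [this]
        exact ENNReal.tendsto_pow_atTop_nhds_zero_of_lt_one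
          (ENNReal.ofReal_lt_one.mpr S.lam_lt_one)
      have hc : (ENNReal.ofReal (S.lam ^ (m-1) * (1 - S.lam))) ≠ ⊤ := ENNReal.ofReal_ne_top
      have h2 := ENNReal.Tendsto.const_mul h1 (Or.inr hc)
      simpa using h2
    exact le_antisymm (ge_of_tendsto' htend hbound) zero_le
  have hmes : S.mes {z | S.psi z ≤ S.psi x} ≤ ENNReal.ofReal (S.lam ^ m) := by
    rw [S.mes_apply]
    calc volume ({z | S.psi z ≤ S.psi x} ∩ Set.Icc 0 1)
        ≤ volume (S.Lam m ∪ N) := measure_mono hsub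
      _ ≤ volume (S.Lam m) + volume N := measure_union_le _ _
      _ = ENNReal.ofReal (S.lam ^ m) := by rw [(S.Lam_meas_vol m).2, hNzero, add_zero]
  unfold F
  calc (S.mes {z | S.psi z ≤ S.psi x}).toReal
      ≤ (ENNReal.ofReal (S.lam ^ m)).toReal := ENNReal.toReal_mono (by simp) hmes
    _ = S.lam ^ m := ENNReal.toReal_ofReal (pow_nonneg (le_of_lt S.lam_pos) _)

lemma F_zero {x : ℝ} (h : ∀ i, S.G^[i] x ∈ S.IU) : S.F (S.psi x) = 0 := by
  have hle : ∀ m : ℕ, S.F (S.psi x) ≤ S.lam ^ (m+1) :=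
    fun m => S.F_upper (by omega) (fun i _ => h i)
  have htend : Filter.Tendsto (fun m : ℕ => S.lam ^ (m+1)) Filter.atTop (𝓝 0) := by
    have := tendsto_pow_atTop_nhds_zero_of_lt_one (le_of_lt S.lam_pos) S.lam_lt_one
    exact this.comp (Filter.tendsto_add_atTop_nat 1)
  have := ge_of_tendsto' htend hle
  linarith [S.F_nonneg (S.psi x)]

end CantorData
namespace CantorData

variable (S : CantorData)

lemma aux_rpow {α τ t : ℝ} (hα : 0 < α) (hτ : 0 < τ) {n : ℕ} (hn : 0 < n) (ht : 0 ≤ t) :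
    ENNReal.ofReal (((n:ℝ)/τ) ^ (1/α)) < ENNReal.ofReal t ^ (-(1/α)) ↔ t < τ / n := by
  have hn' : (0:ℝ) < n := by exact_mod_cast hn
  have hαinv : (0:ℝ) < 1/α := by positivity
  rcases eq_or_lt_of_le ht with h0 | h0
  · rw [← h0]
    simp only [ENNReal.ofReal_zero]
    rw [ENNReal.zero_rpow_of_neg (by linarith : -(1/α) < 0)]
    constructor
    · intro _; positivity
    · intro _; exact ENNReal.ofReal_lt_top
  · rw [ENNReal.ofReal_rpow_of_pos h0,
      ENNReal.ofReal_lt_ofReal_iff (Real.rpow_pos_of_pos h0 _)]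
    have heq : t ^ (-(1/α)) = (t⁻¹) ^ (1/α) := by
      rw [Real.rpow_neg ht, ← Real.inv_rpow ht]
    rw [heq, Real.rpow_lt_rpow_iff (by positivity) (by positivity) hαinv,
      lt_inv_comm₀ (by positivity) h0, inv_div]

lemma mem_Un_iff {α : ℝ} (hα : 0 < α) {τ : ℝ} (hτ : 0 < τ) {n : ℕ} (hn : 0 < n) (x : ℝ) :
    x ∈ S.Un α τ n ↔ x ∈ Set.Icc (0:ℝ) 1 ∧ S.F (S.psi x) < τ / n := by
  unfold Un X un phi
  simp only [Function.iterate_zero, id_eq, Set.mem_setOf_eq, Set.mem_sep_iff]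
  constructor
  · rintro ⟨hx1, hx2⟩
    exact ⟨hx1, (aux_rpow hα hτ hn (S.F_nonneg _)).mp hx2⟩
  · rintro ⟨hx1, hx2⟩
    exact ⟨hx1, (aux_rpow hα hτ hn (S.F_nonneg _)).mpr hx2⟩

lemma jn_spec {τ : ℝ} (hτ : 0 < τ) {n : ℕ} (hn : τ < n) :
    S.lam ^ (S.jn τ n) ≤ τ / n ∧ 1 ≤ S.jn τ n ∧ τ / n < S.lam ^ (S.jn τ n - 1) := by
  have hn0 : (0:ℝ) < n := lt_trans hτ hn
  have hτn : 0 < τ / n := by positivity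
  have hne : {j : ℕ | S.lam ^ j ≤ τ / n}.Nonempty := by
    obtain ⟨k, hk⟩ := exists_pow_lt_of_lt_one hτn S.lam_lt_one
    exact ⟨k, le_of_lt hk⟩
  have h1 : S.lam ^ (S.jn τ n) ≤ τ / n := Nat.sInf_mem hne
  have h2 : 1 ≤ S.jn τ n := by
    by_contra h
    push_neg at h
    interval_cases h' : S.jn τ n
    · simp only [pow_zero] at h1
      have : τ / n < 1 := (div_lt_one hn0).mpr hn
      linarith
  refine ⟨h1, h2, ?_⟩
  have h3 : S.jn τ n - 1 ∉ {j : ℕ | S.lam ^ j ≤ τ / n} := by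
    apply Nat.notMem_of_lt_sInf
    have heq : S.jn τ n = sInf {j : ℕ | S.lam ^ j ≤ τ / n} := rfl
    omega
  simpa using not_le.mp h3

lemma piece_cases {P : Set ℝ} (hP : P ∈ S.PieceFamily) :
    P ⊆ Set.Icc (0:ℝ) 1 ∧ (P ⊆ S.IU ∨ ∀ x ∈ P, x ∉ S.IU) := by
  have hk := S.hkI
  rcases hP with ((⟨i, hi, rfl⟩ | ⟨i, hi, rfl⟩) | hP)
  · simp only [Set.mem_Iio] at hi
    refine ⟨S.Ii_subset_Icc hi, Or.inl ?_⟩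
    intro x hx
    exact Set.mem_biUnion (Finset.mem_range.mpr hi) hx
  · simp only [Set.mem_setOf_eq] at hi
    refine ⟨?_, Or.inr (fun x hx => S.mid_not_IU hi hx)⟩
    intro x hx
    exact ⟨le_trans (S.a_nonneg (2*i+1) (by omega)) (le_of_lt hx.1),
      le_trans (le_of_lt hx.2) (S.a_le_one (2*i+2) (by omega))⟩
  · rcases hP with rfl | hP
    · refine ⟨?_, Or.inr (fun x hx => S.left_not_IU hx)⟩
      intro x hx
      exact ⟨hx.1, le_trans (le_of_lt hx.2) (S.a_le_one 0 (by omega))⟩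
    · rw [Set.mem_singleton_iff] at hP
      subst hP
      refine ⟨?_, Or.inr (fun x hx => S.right_not_IU hx)⟩
      intro x hx
      exact ⟨le_trans (S.a_nonneg _ (by omega)) (le_of_lt hx.1), hx.2⟩

lemma cyl_mem {d : ℕ} {w : ℕ → Set ℝ} {x : ℝ} (hx : x ∈ S.Cyl d w) {k : ℕ} (hk : k < d) :
    S.G^[k] x ∈ w k := by
  unfold Cyl at hx
  simp only [Set.mem_iInter] at hx
  exact hx k (Finset.mem_range.mpr hk)

lemma cyl_pattern {d : ℕ} {w : ℕ → Set ℝ} (hw : ∀ k < d, w k ∈ S.PieceFamily)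
    {x y : ℝ} (hx : x ∈ S.Cyl d w) (hy : y ∈ S.Cyl d w) {k : ℕ} (hk : k < d) :
    S.G^[k] x ∈ S.IU ↔ S.G^[k] y ∈ S.IU := by
  rcases (S.piece_cases (hw k hk)).2 with h | h
  · exact ⟨fun _ => h (S.cyl_mem hy hk), fun _ => h (S.cyl_mem hx hk)⟩
  · exact ⟨fun hc => absurd hc (h _ (S.cyl_mem hx hk)),
      fun hc => absurd hc (h _ (S.cyl_mem hy hk))⟩

lemma cyl_mem_Icc {d : ℕ} (hd : 0 < d) {w : ℕ → Set ℝ} (hw : ∀ k < d, w k ∈ S.PieceFamily)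
    {x : ℝ} (hx : x ∈ S.Cyl d w) : x ∈ Set.Icc (0:ℝ) 1 := by
  have := S.cyl_mem hx hd
  have h := (S.piece_cases (hw 0 hd)).1
  simpa using h this

end CantorData
namespace CantorData

variable (S : CantorData)

lemma pow_anti {b c : ℕ} (h : b ≤ c) : S.lam ^ c ≤ S.lam ^ b :=
  pow_le_pow_of_le_one (le_of_lt S.lam_pos) (le_of_lt S.lam_lt_one) h

lemma pow_anti_strict {b c : ℕ} (h : b < c) : S.lam ^ c < S.lam ^ b :=
  (pow_lt_pow_iff_right_of_lt_one₀ S.lam_pos S.lam_lt_one).mpr h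

lemma escape_window {α : ℝ} (hα : 0 < α) {τ' τ'' : ℝ} (h1 : 0 < τ'') (h2 : τ'' < τ')
    {n : ℕ} (hn1 : τ' < n) {j : ℕ} (hjdef : j = S.jn τ' n) (hj4 : 2 ≤ j)
    {y : ℝ} (hy : y ∈ S.UnPair1 α τ' τ'' n) :
    ∃ m : ℕ, (∀ i < m, S.G^[i] y ∈ S.IU) ∧ S.G^[m] y ∉ S.IU ∧
      j - 1 ≤ m ∧ m ≤ j + 1 ∧
      (S.lam ^ j ≠ τ' / n → m ≤ j) ∧ (S.lam ^ j = τ' / n → j ≤ m) := by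
  have hτ' : 0 < τ' := lt_trans h1 h2
  have hn0 : (0:ℝ) < n := lt_trans hτ' hn1
  have hnn : 0 < n := by exact_mod_cast hn0
  obtain ⟨hj1, hj2, hj3⟩ := S.jn_spec hτ' hn1
  rw [← hjdef] at hj1 hj3
  obtain ⟨hyP, hyG⟩ := hy
  obtain ⟨hy1, hy2⟩ := hyP
  obtain ⟨hyIcc, hF1⟩ := (S.mem_Un_iff hα hτ' hnn y).mp hy1
  have hF2 : τ'' / n ≤ S.F (S.psi y) := by
    by_contra hc
    push_neg at hc
    exact hy2 ((S.mem_Un_iff hα h1 hnn y).mpr ⟨hyIcc, hc⟩)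
  have hesc : ∃ i, S.G^[i] y ∉ S.IU := by
    by_contra hc
    push_neg at hc
    rw [S.F_zero hc] at hF2
    have : (0:ℝ) < τ'' / n := by positivity
    linarith
  set m := Nat.find hesc with hmdef
  have hmesc : S.G^[m] y ∉ S.IU := Nat.find_spec hesc
  have hmmin : ∀ i < m, S.G^[i] y ∈ S.IU := fun i hi => by
    by_contra hc
    exact Nat.find_min hesc hi hc
  -- lower bound on m
  have hml : j - 1 ≤ m := by
    have hl := S.F_lower hmesc
    have : S.lam ^ (m+1) < S.lam ^ (j-1) := by
      calc S.lam ^ (m+1) ≤ S.F (S.psi y) := hl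
        _ < τ' / n := hF1
        _ < S.lam ^ (j-1) := hj3
    have := (pow_lt_pow_iff_right_of_lt_one₀ S.lam_pos S.lam_lt_one).mp this
    omega
  have hm1 : 1 ≤ m := by omega
  have hupy : S.F (S.psi y) ≤ S.lam ^ m := S.F_upper hm1 hmmin
  -- G y analysis
  rw [Set.mem_preimage] at hyG
  have hGyIcc : S.G y ∈ Set.Icc (0:ℝ) 1 := hyG.1
  have hGnot : S.G y ∉ S.UnPair α τ' τ'' n := hyG.2
  have hGesc : S.G^[m-1] (S.G y) ∉ S.IU := by
    have h : S.G^[m-1] (S.G y) = S.G^[m] y := by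
      rw [← Function.iterate_succ_apply]
      congr 1
      omega
    rw [h]
    exact hmesc
  have hGmin : ∀ i < m - 1, S.G^[i] (S.G y) ∈ S.IU := by
    intro i hi
    rw [← Function.iterate_succ_apply]
    exact hmmin (i+1) (by omega)
  have hGlow : S.lam ^ m ≤ S.F (S.psi (S.G y)) := by
    have := S.F_lower hGesc
    have heq : m - 1 + 1 = m := by omega
    rwa [heq] at this
  have hGnotU : S.G y ∉ S.Un α τ' n := by
    intro hmem
    have : S.G y ∈ S.Un α τ'' n := by
      by_contra hc
      exact hGnot ⟨hmem, hc⟩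
    obtain ⟨_, hFG⟩ := (S.mem_Un_iff hα h1 hnn (S.G y)).mp this
    have : τ'' / n < τ'' / n := by
      calc τ'' / n ≤ S.F (S.psi y) := hF2
        _ ≤ S.lam ^ m := hupy
        _ ≤ S.F (S.psi (S.G y)) := hGlow
        _ < τ'' / n := hFG
    exact lt_irrefl _ this
  have hF3 : τ' / n ≤ S.F (S.psi (S.G y)) := by
    by_contra hc
    push_neg at hc
    exact hGnotU ((S.mem_Un_iff hα hτ' hnn (S.G y)).mpr ⟨hGyIcc, hc⟩)
  -- upper bound m ≤ j+1
  have hmu : m ≤ j + 1 := by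
    by_contra hc
    push_neg at hc
    have hm2 : 1 ≤ m - 1 := by omega
    have hup := S.F_upper hm2 hGmin
    have : S.F (S.psi (S.G y)) < τ' / n := by
      calc S.F (S.psi (S.G y)) ≤ S.lam ^ (m-1) := hup
        _ ≤ S.lam ^ (j+1) := S.pow_anti (by omega)
        _ < S.lam ^ j := S.pow_anti_strict (by omega)
        _ ≤ τ' / n := hj1
    linarith
  refine ⟨m, hmmin, hmesc, hml, hmu, ?_, ?_⟩
  · intro hne
    by_contra hc
    push_neg at hc
    have hmeq : m = j + 1 := by omega
    have hm2 : 1 ≤ m - 1 := by omega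
    have hup := S.F_upper hm2 hGmin
    have heq : m - 1 = j := by omega
    rw [heq] at hup
    have : S.lam ^ j = τ' / n := le_antisymm hj1 (le_trans hF3 hup)
    exact hne this
  · intro heq
    by_contra hc
    push_neg at hc
    have hmeq : m = j - 1 := by omega
    have hl := S.F_lower hmesc
    rw [hmeq] at hl
    have h' : j - 1 + 1 = j := by omega
    rw [h'] at hl
    rw [heq] at hl
    linarith

lemma Gamma_subset {α : ℝ} (hα : 0 < α) {τ' τ'' : ℝ} (h1 : 0 < τ'') (h2 : τ'' < τ')
    {n : ℕ} (hn1 : τ' < n) (hn2 : τ' < n * S.lam) :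
    ∃ p : ℕ, S.jn τ' n - 1 ≤ p ∧
      S.GammaPlus α τ' τ'' n ⊆ S.Eset p ∪ S.Eset (p+1) := by
  have hτ' : 0 < τ' := lt_trans h1 h2
  have hn0 : (0:ℝ) < n := lt_trans hτ' hn1
  have hnn : 0 < n := by exact_mod_cast hn0
  obtain ⟨hj1, hj2, hj3⟩ := S.jn_spec hτ' hn1
  set j := S.jn τ' n with hjdef
  have hj4 : 2 ≤ j := by
    by_contra h
    push_neg at h
    have hj : j = 1 := by omega
    rw [hj, pow_one] at hj1
    have : τ' / n < S.lam := (div_lt_iff₀ hn0).mpr (by linarith [hn2])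
    linarith
  have main : ∀ (p : ℕ), (∀ y ∈ S.UnPair1 α τ' τ'' n,
      ∃ m : ℕ, (∀ i < m, S.G^[i] y ∈ S.IU) ∧ S.G^[m] y ∉ S.IU ∧ p ≤ m ∧ m ≤ p + 1) →
      S.GammaPlus α τ' τ'' n ⊆ S.Eset p ∪ S.Eset (p+1) := by
    intro p hp x hx
    obtain ⟨C, ⟨⟨w, hw, rfl⟩, ⟨y, hyC, hyU⟩⟩, hxC⟩ := hx
    obtain ⟨m, hmmin, hmesc, hpm, hmp⟩ := hp y hyU
    obtain ⟨m', hm', hm'2⟩ : ∃ m', m' ≤ m ∧ ∃ m'', m = m'' ∧ True := ⟨m, le_refl _, m, rfl, trivial⟩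
    -- p ≤ m ≤ p+1 : need m < 2*j to transfer pattern
    have hwin := escape_window S hα h1 h2 hn1 hjdef hj4 hyU
    obtain ⟨m₀, h₀min, h₀esc, h₀l, h₀u, _, _⟩ := hwin
    -- m and m₀ are both the first escape time, so equal; use m directly with bound from hwin
    have hmeq : m = m₀ := by
      rcases Nat.lt_trichotomy m m₀ with h | h | h
      · exact absurd (h₀min m h) hmesc
      · exact h
      · exact absurd (hmmin m₀ h) h₀esc
    have hmlt : m < 2 * j := by omega
    have hxIcc : x ∈ Set.Icc (0:ℝ) 1 := S.cyl_mem_Icc (by omega) hw hxC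
    have hxE : x ∈ S.Eset m := by
      refine ⟨hxIcc, ?_, ?_⟩
      · intro i hi
        exact (S.cyl_pattern hw hxC hyC (by omega)).mpr (hmmin i hi)
      · intro hc
        exact hmesc ((S.cyl_pattern hw hxC hyC (by omega)).mp hc)
    rcases Nat.eq_or_lt_of_le hpm with h | h
    · exact Or.inl (h ▸ hxE)
    · have : m = p + 1 := by omega
      exact Or.inr (this ▸ hxE)
  by_cases hbd : S.lam ^ j = τ' / n
  · refine ⟨j, by omega, ?_⟩
    apply main
    intro y hy
    obtain ⟨m, ha, hb, hc, hd, he, hf⟩ := escape_window S hα h1 h2 hn1 hjdef hj4 hy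
    exact ⟨m, ha, hb, hf hbd, hd⟩
  · refine ⟨j - 1, by omega, ?_⟩
    apply main
    intro y hy
    obtain ⟨m, ha, hb, hc, hd, he, hf⟩ := escape_window S hα h1 h2 hn1 hjdef hj4 hy
    refine ⟨m, ha, hb, hc, ?_⟩
    have := he hbd
    omega

end CantorData
namespace CantorData

variable (S : CantorData)

lemma main_bound {α : ℝ} (hα : 0 < α) {τ' τ'' : ℝ} (h1 : 0 < τ'') (h2 : τ'' < τ')
    {n : ℕ} (hn1 : τ' < n) (hn2 : τ' < n * S.lam) (r : ℕ) :
    (S.mes (S.GammaPlus α τ' τ'' n ∩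
        ⋃ k ∈ Finset.Icc 2 (r - 1), (S.G^[k]) ⁻¹' (S.GammaPlus α τ' τ'' n))).toReal
      ≤ (r : ℝ) * (4 * (S.lam ^ (S.jn τ' n - 1)) ^ 2) := by
  have hτ' : 0 < τ' := lt_trans h1 h2
  have hn0 : (0:ℝ) < n := lt_trans hτ' hn1
  have hnn : 0 < n := by exact_mod_cast hn0
  obtain ⟨hj1, hj2, hj3⟩ := S.jn_spec hτ' hn1
  set j := S.jn τ' n with hjdef
  have hj4 : 2 ≤ j := by
    by_contra h
    push_neg at h
    have hj : j = 1 := by omega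
    rw [hj, pow_one] at hj1
    have : τ' / n < S.lam := (div_lt_iff₀ hn0).mpr (by linarith [hn2])
    linarith
  obtain ⟨p, hp, hsub⟩ := S.Gamma_subset hα h1 h2 hn1 hn2
  rw [← hjdef] at hp
  have hp1 : 1 ≤ p := by omega
  set B := S.Eset p ∪ S.Eset (p+1) with hB
  have hBmeas : MeasurableSet B := (S.Eset_meas_vol p).1.union (S.Eset_meas_vol (p+1)).1
  have hBsub : B ⊆ Set.Icc (0:ℝ) 1 := by
    rintro x (hx | hx)
    · exact S.Eset_subset p hx
    · exact S.Eset_subset (p+1) hx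
  set D := ENNReal.ofReal (S.lam ^ (j - 1)) with hD
  have hEp_le : ∀ m : ℕ, p ≤ m → ENNReal.ofReal (S.lam ^ m * (1 - S.lam)) ≤ D := by
    intro m hm
    apply ENNReal.ofReal_le_ofReal
    calc S.lam ^ m * (1 - S.lam) ≤ S.lam ^ m * 1 := by
          apply mul_le_mul_of_nonneg_left (by linarith [S.lam_pos]) (pow_nonneg (le_of_lt S.lam_pos) m)
      _ = S.lam ^ m := mul_one _
      _ ≤ S.lam ^ (j-1) := S.pow_anti (by omega)
  have hvolB : volume B ≤ 2 * D := by
    calc volume B ≤ volume (S.Eset p) + volume (S.Eset (p+1)) := measure_union_le _ _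
      _ ≤ D + D := by
          rw [(S.Eset_meas_vol p).2, (S.Eset_meas_vol (p+1)).2]
          exact add_le_add (hEp_le p (le_refl _)) (hEp_le (p+1) (by omega))
      _ = 2 * D := (two_mul D).symm
  have hperk : ∀ k : ℕ, 2 ≤ k → volume (B ∩ (S.G^[k]) ⁻¹' B) ≤ 2 * (D * (2 * D)) := by
    intro k hk
    have hmbound : ∀ m : ℕ, p ≤ m → m ≤ p + 1 →
        volume (S.Eset m ∩ (S.G^[k]) ⁻¹' B) ≤ D * (2 * D) := by
      intro m hpm hmp
      rcases le_or_gt k m with hkm | hkm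
      · -- empty
        have hempty : S.Eset m ∩ (S.G^[k]) ⁻¹' B = ∅ := by
          ext x
          simp only [Set.mem_inter_iff, Set.mem_preimage, Set.mem_empty_iff_false, iff_false]
          rintro ⟨hxE, hxk⟩
          have hesc := hxE.2.2
          have hIn : ∀ m', p ≤ m' → S.G^[k] x ∈ S.Eset m' → False := by
            intro m' hm' hxm'
            have hlt : m - k < m' := by omega
            have := hxm'.2.1 (m - k) hlt
            rw [← Function.iterate_add_apply] at this
            have heq : m - k + k = m := by omega
            rw [heq] at this
            exact hesc this
          rcases hxk with h | h
          · exact hIn p (le_refl _) h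
          · exact hIn (p+1) (by omega) h
        rw [hempty]
        simp
      · rw [(S.E_ind m k hkm hBmeas hBsub).2]
        exact mul_le_mul' (hEp_le m hpm) hvolB
    have hdec : B ∩ (S.G^[k]) ⁻¹' B
        = (S.Eset p ∩ (S.G^[k]) ⁻¹' B) ∪ (S.Eset (p+1) ∩ (S.G^[k]) ⁻¹' B) := by
      rw [hB, Set.union_inter_distrib_right]
    calc volume (B ∩ (S.G^[k]) ⁻¹' B)
        ≤ volume (S.Eset p ∩ (S.G^[k]) ⁻¹' B) + volume (S.Eset (p+1) ∩ (S.G^[k]) ⁻¹' B) := by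
          rw [hdec]; exact measure_union_le _ _
      _ ≤ D * (2 * D) + D * (2 * D) :=
          add_le_add (hmbound p (le_refl _) (by omega)) (hmbound (p+1) (by omega) (by omega))
      _ = 2 * (D * (2 * D)) := (two_mul _).symm
  -- total bound
  have htot : S.mes (S.GammaPlus α τ' τ'' n ∩
      ⋃ k ∈ Finset.Icc 2 (r - 1), (S.G^[k]) ⁻¹' (S.GammaPlus α τ' τ'' n))
      ≤ (r : ℝ≥0∞) * (2 * (D * (2 * D))) := by
    have hsub2 : S.GammaPlus α τ' τ'' n ∩
        (⋃ k ∈ Finset.Icc 2 (r - 1), (S.G^[k]) ⁻¹' (S.GammaPlus α τ' τ'' n))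
        ⊆ ⋃ k ∈ Finset.Icc 2 (r - 1), (B ∩ (S.G^[k]) ⁻¹' B) := by
      rintro x ⟨hx1, hx2⟩
      simp only [Set.mem_iUnion] at hx2 ⊢
      obtain ⟨k, hk, hxk⟩ := hx2
      exact ⟨k, hk, hsub hx1, hsub hxk⟩
    calc S.mes _ ≤ S.mes (⋃ k ∈ Finset.Icc 2 (r - 1), (B ∩ (S.G^[k]) ⁻¹' B)) :=
          measure_mono hsub2
      _ ≤ volume (⋃ k ∈ Finset.Icc 2 (r - 1), (B ∩ (S.G^[k]) ⁻¹' B)) := by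
          rw [S.mes_apply]
          exact measure_mono Set.inter_subset_left
      _ ≤ ∑ k ∈ Finset.Icc 2 (r - 1), volume (B ∩ (S.G^[k]) ⁻¹' B) :=
          measure_biUnion_finset_le _ _
      _ ≤ ∑ k ∈ Finset.Icc 2 (r - 1), 2 * (D * (2 * D)) :=
          Finset.sum_le_sum (fun k hk => hperk k (Finset.mem_Icc.mp hk).1)
      _ = (Finset.Icc 2 (r - 1)).card • (2 * (D * (2 * D))) := by
          rw [Finset.sum_const]
      _ ≤ (r : ℝ≥0∞) * (2 * (D * (2 * D))) := by
          rw [nsmul_eq_mul]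
          apply mul_le_mul_left
          have hcard : (Finset.Icc 2 (r - 1)).card ≤ r := by
            rw [Nat.card_Icc]
            omega
          exact_mod_cast Nat.cast_le.mpr hcard
  have hofr : (r : ℝ≥0∞) * (2 * (D * (2 * D)))
      = ENNReal.ofReal ((r : ℝ) * (4 * (S.lam ^ (j - 1)) ^ 2)) := by
    have hnn' : (0:ℝ) ≤ S.lam ^ (j-1) := pow_nonneg (le_of_lt S.lam_pos) _
    rw [ENNReal.ofReal_mul (by positivity), ENNReal.ofReal_mul (by norm_num),
      ENNReal.ofReal_natCast]
    congr 1
    rw [sq, ENNReal.ofReal_mul hnn']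
    rw [hD]
    have h4 : (ENNReal.ofReal (4:ℝ)) = 4 := by norm_num
    rw [h4]
    ring
  rw [hofr] at htot
  exact ENNReal.toReal_le_of_le_ofReal (by positivity) htot

end CantorData

/-- condition `Д'*_{q_n}` with `q_n ≡ 1` for the cylinder
approximations: `n · 𝔪(Γ_n^+ ∩ ⋃_{k=2}^{r_n-1} G^{-k}(Γ_n^+)) → 0`. -/
theorem D_prime_condition (S : CantorData) (α : ℝ)
    (hα : α ∈ Set.Ioo (0:ℝ) 2) (τ' τ'' : ℝ) (h1 : 0 < τ'') (h2 : τ'' < τ')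
    (r : ℕ → ℕ) (hr0 : ∀ n, 0 < r n)
    (hr : Filter.Tendsto (fun n : ℕ => (r n : ℝ)) Filter.atTop Filter.atTop)
    (hrn : Filter.Tendsto (fun n : ℕ => (r n : ℝ) / (n : ℝ)) Filter.atTop (𝓝 0)) :
    Filter.Tendsto
      (fun n : ℕ => (n : ℝ) *
        (S.mes (S.GammaPlus α τ' τ'' n ∩
          ⋃ k ∈ Finset.Icc 2 (r n - 1), (S.G^[k]) ⁻¹' (S.GammaPlus α τ' τ'' n))).toReal)
      Filter.atTop (𝓝 0) := by
  obtain ⟨hα0, hα2⟩ := hα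
  have hτ' : 0 < τ' := lt_trans h1 h2
  have hlam0 : 0 < S.lam := S.lam_pos
  have hlam1 : S.lam < 1 := S.lam_lt_one
  set C : ℝ := 4 * τ'^2 / S.lam^2 with hC
  have hCpos : 0 ≤ C := by positivity
  apply squeeze_zero' (Filter.Eventually.of_forall
    (fun n => by positivity)) (g := fun n => (r n : ℝ) / n * C) ?_ ?_
  · -- eventual bound
    rw [Filter.eventually_atTop]
    refine ⟨⌈τ' / S.lam⌉₊ + 1, fun n hn => ?_⟩
    have hn' : τ' / S.lam < (n:ℝ) := by
      calc τ' / S.lam ≤ (⌈τ' / S.lam⌉₊ : ℝ) := Nat.le_ceil _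
        _ < (n : ℝ) := by exact_mod_cast hn
    have hn2 : τ' < (n:ℝ) * S.lam := (div_lt_iff₀ hlam0).mp hn'
    have hnpos : 0 < n := by omega
    have hncast : (1:ℝ) ≤ (n:ℝ) := by exact_mod_cast hnpos
    have hn1 : τ' < (n:ℝ) := by nlinarith
    have hn0 : (0:ℝ) < n := lt_trans hτ' hn1
    have hb := S.main_bound hα0 h1 h2 hn1 hn2 (r n)
    obtain ⟨hj1, hj2, hj3⟩ := S.jn_spec hτ' hn1
    set j := S.jn τ' n with hjdef
    have hcmp : S.lam ^ (j - 1) ≤ τ' / ((n:ℝ) * S.lam) := by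
      have hps : S.lam ^ (j-1) * S.lam = S.lam ^ j := by
        rw [← pow_succ]
        congr 1
        omega
      rw [le_div_iff₀ (by positivity), ← mul_assoc]
      calc S.lam ^ (j-1) * (n:ℝ) * S.lam = S.lam ^ j * n := by rw [mul_right_comm, hps]
        _ ≤ (τ' / n) * n := by
            apply mul_le_mul_of_nonneg_right hj1 (le_of_lt hn0)
        _ = τ' := by field_simp
    have hsq : (S.lam ^ (j-1))^2 ≤ (τ' / ((n:ℝ) * S.lam))^2 := by
      apply pow_le_pow_left₀ (pow_nonneg (le_of_lt hlam0) _) hcmp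
    show (n : ℝ) * (S.mes (S.GammaPlus α τ' τ'' n ∩
          ⋃ k ∈ Finset.Icc 2 (r n - 1), (S.G^[k]) ⁻¹' (S.GammaPlus α τ' τ'' n))).toReal
        ≤ (r n : ℝ) / n * C
    calc (n : ℝ) * (S.mes (S.GammaPlus α τ' τ'' n ∩
          ⋃ k ∈ Finset.Icc 2 (r n - 1), (S.G^[k]) ⁻¹' (S.GammaPlus α τ' τ'' n))).toReal
        ≤ (n : ℝ) * ((r n : ℝ) * (4 * (S.lam ^ (j - 1)) ^ 2)) := by
          apply mul_le_mul_of_nonneg_left hb (le_of_lt hn0)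
      _ ≤ (n : ℝ) * ((r n : ℝ) * (4 * (τ' / ((n:ℝ) * S.lam))^2)) := by
          apply mul_le_mul_of_nonneg_left _ (le_of_lt hn0)
          apply mul_le_mul_of_nonneg_left _ (Nat.cast_nonneg _)
          linarith
      _ = (r n : ℝ) / n * C := by
          rw [hC]
          field_simp
  · have := hrn.mul_const C
    simpa using this
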